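/- arXiv:1305.4463 — 3 statements merged into one kernel-verified Lean document; each statement's English description precedes it below -/
import Mathlib

section
/- For 2 ≤ j ≤ n−1, if f = (f_1,...,f_n) is a nonnegative equilibrium with ∑_k f_k = ρ, then f_j satisfies the quadratic equation −ρ f_j² + [(1−3ρ) S_{j−1} + ρ(2ρ−1)] f_j + (1−ρ) f_{j−1} (ρ − S_{j−2}) = 0, where S_m = ∑_{k=1}^m f_k. -/
open Finset

set_option maxRecDepth 8000
set_option maxHeartbeats 1000000

/-- The prototypical table of games (indices in `Fin n`, 0-based; last index is class n). -/
def tab (n : ℕ) (ρ : ℝ) (h k j : Fin n) : ℝ :=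
  if h ≤ k then
    if h.val = n - 1 then (if j = h then 1 else 0)
    else (if j = h then ρ else 0) + (if j.val = h.val + 1 then 1 - ρ else 0)
  else (if j = k then ρ else 0) + (if j = h then 1 - ρ else 0)

/-- for 2 ≤ j ≤ n−1 (1-based), an equilibrium component `f_j` satisfies the
quadratic equation `−ρ f_j² + [(1−3ρ) S_{j−1} + ρ(2ρ−1)] f_j + (1−ρ) f_{j−1}(ρ − S_{j−2}) = 0`,
where `S_m` is the sum of the first `m` components. Here `i : Fin n` is the 0-based index,
so `i.val = j − 1` with `1 ≤ i.val ≤ n − 2`. -/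
theorem middle_component_quadratic
    (n : ℕ) (hn : 3 ≤ n) (ρ : ℝ) (hρ : 0 < ρ) (hρ1 : ρ ≤ 1)
    (f : Fin n → ℝ) (hf_nonneg : ∀ j, 0 ≤ f j)
    (hmass : ∑ j, f j = ρ)
    (heq : ∀ j : Fin n, ∑ h, ∑ k, tab n ρ h k j * f h * f k = ρ * f j)
    (i : Fin n) (hi1 : 1 ≤ i.val) (hi2 : i.val ≤ n - 2)
    (S : ℕ → ℝ) (hS : ∀ m, S m = ∑ k ∈ univ.filter (fun k : Fin n => k.val < m), f k) :
    -ρ * (f i) ^ 2 + ((1 - 3 * ρ) * S i.val + ρ * (2 * ρ - 1)) * f i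
      + (1 - ρ) * f ⟨i.val - 1, by omega⟩ * (ρ - S (i.val - 1)) = 0 := by
  set prev : Fin n := ⟨i.val - 1, by omega⟩ with hprev
  -- complementary sums
  have hB : ∀ m : ℕ, ∑ k ∈ univ.filter (fun k : Fin n => ¬ k.val < m), f k = ρ - S m := by
    intro m
    have h1 := Finset.sum_filter_add_sum_filter_not univ (fun k : Fin n => k.val < m) f
    rw [hmass] at h1
    rw [hS m] at *
    linarith
  -- simplified form of tab for target j = i
  have htab : ∀ h k : Fin n, tab n ρ h k i =
      if h ≤ k then ((if i = h then ρ else 0) + (if i.val = h.val + 1 then 1 - ρ else 0))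
      else ((if i = k then ρ else 0) + (if i = h then 1 - ρ else 0)) := by
    intro h k
    unfold tab
    by_cases hle : h ≤ k
    · rw [if_pos hle, if_pos hle]
      by_cases hlast : h.val = n - 1
      · rw [if_pos hlast]
        have h1 : ¬ (i = h) := by
          intro hc; rw [hc] at hi2; omega
        have h2 : ¬ (i.val = h.val + 1) := by
          have := i.isLt; omega
        rw [if_neg h1, if_neg h1, if_neg h2]
        ring
      · rw [if_neg hlast]
    · rw [if_neg hle, if_neg hle]
  -- inner sum computation
  have key : ∀ h : Fin n, ∑ k, tab n ρ h k i * f h * f k =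
      (if h = i then ρ * f h * (ρ - S i.val) + (1 - ρ) * f h * S i.val else 0)
      + (if h.val + 1 = i.val then (1 - ρ) * f h * (ρ - S (i.val - 1)) else 0)
      + (if i < h then ρ * f h * f i else 0) := by
    intro h
    have hsplit := Finset.sum_filter_add_sum_filter_not univ (fun k : Fin n => h ≤ k)
      (fun k => tab n ρ h k i * f h * f k)
    rw [← hsplit]
    have e1 : ∑ k ∈ univ.filter (fun k : Fin n => h ≤ k), tab n ρ h k i * f h * f k
        = ((if i = h then ρ else 0) + (if i.val = h.val + 1 then 1 - ρ else 0)) * f h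
            * (ρ - S h.val) := by
      rw [← hB h.val]
      have hfil : univ.filter (fun k : Fin n => h ≤ k)
          = univ.filter (fun k : Fin n => ¬ k.val < h.val) := by
        apply Finset.filter_congr
        intro k _
        rw [Fin.le_def]
        omega
      rw [hfil, Finset.mul_sum]
      apply Finset.sum_congr rfl
      intro k hk
      simp only [Finset.mem_filter, Finset.mem_univ, true_and] at hk
      have hle : h ≤ k := by rw [Fin.le_def]; omega
      rw [htab h k, if_pos hle]
    have e2 : ∑ k ∈ univ.filter (fun k : Fin n => ¬ h ≤ k), tab n ρ h k i * f h * f k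
        = ρ * f h * (if i.val < h.val then f i else 0)
          + (if i = h then 1 - ρ else 0) * f h * S h.val := by
      have estep : ∀ k ∈ univ.filter (fun k : Fin n => ¬ h ≤ k),
          tab n ρ h k i * f h * f k
            = (if i = k then ρ * f h * f k else 0)
              + (if i = h then 1 - ρ else 0) * f h * f k := by
        intro k hk
        simp only [Finset.mem_filter, Finset.mem_univ, true_and] at hk
        rw [htab h k, if_neg hk]
        by_cases hik : i = k
        · rw [if_pos hik, if_pos hik]; ring
        · rw [if_neg hik, if_neg hik]; ring
      rw [Finset.sum_congr rfl estep, Finset.sum_add_distrib]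
      congr 1
      · rw [Finset.sum_ite_eq]
        by_cases him : i.val < h.val
        · have hmem : i ∈ univ.filter (fun k : Fin n => ¬ h ≤ k) := by
            simp only [Finset.mem_filter, Finset.mem_univ, true_and, Fin.le_def, not_le]; omega
          rw [if_pos hmem, if_pos him]
        · have hmem : i ∉ univ.filter (fun k : Fin n => ¬ h ≤ k) := by
            simp only [Finset.mem_filter, Finset.mem_univ, true_and, Fin.le_def, not_le]; omega
          rw [if_neg hmem, if_neg him]
          ring
      · rw [hS h.val, Finset.mul_sum]
        have hfil : univ.filter (fun k : Fin n => ¬ h ≤ k)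
            = univ.filter (fun k : Fin n => k.val < h.val) := by
          apply Finset.filter_congr
          intro k _
          rw [Fin.le_def]
          omega
        rw [hfil]
    rw [e1, e2]
    -- now case analysis on the relation between h and i
    rcases lt_trichotomy h.val i.val with hcase | hcase | hcase
    · have h1 : ¬ (i = h) := by intro hc; rw [hc] at hcase; omega
      have h2 : ¬ (h = i) := fun hc => h1 hc.symm
      have h3 : ¬ (i < h) := by rw [Fin.lt_def]; omega
      have h4 : ¬ (i.val < h.val) := by omega
      by_cases h5 : h.val + 1 = i.val
      · have h6 : i.val = h.val + 1 := h5.symm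
        have h7 : h.val = i.val - 1 := by omega
        rw [if_neg h1, if_neg h1, if_pos h6, if_neg h2, if_pos h5, if_neg h3, if_neg h4,
          h7]
        ring
      · have h6 : ¬ (i.val = h.val + 1) := fun hc => h5 hc.symm
        rw [if_neg h1, if_neg h1, if_neg h6, if_neg h2, if_neg h5, if_neg h3, if_neg h4]
        ring
    · have h1 : i = h := Fin.ext hcase.symm
      have h2 : h = i := h1.symm
      have h3 : ¬ (i < h) := by rw [Fin.lt_def]; omega
      have h4 : ¬ (i.val < h.val) := by omega
      have h5 : ¬ (h.val + 1 = i.val) := by omega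
      have h6 : ¬ (i.val = h.val + 1) := by omega
      rw [if_pos h1, if_pos h1, if_neg h6, if_pos h2, if_neg h5, if_neg h3, if_neg h4,
        hcase]
      ring
    · have h1 : ¬ (i = h) := by intro hc; rw [hc] at hcase; omega
      have h2 : ¬ (h = i) := fun hc => h1 hc.symm
      have h3 : i < h := by rw [Fin.lt_def]; omega
      have h5 : ¬ (h.val + 1 = i.val) := by omega
      have h6 : ¬ (i.val = h.val + 1) := by omega
      rw [if_neg h1, if_neg h1, if_neg h6, if_neg h2, if_neg h5, if_pos h3, if_pos hcase]
      ring
  -- plug into the equilibrium equation for j = i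
  have hE := heq i
  rw [Finset.sum_congr rfl (fun h _ => key h)] at hE
  rw [Finset.sum_add_distrib, Finset.sum_add_distrib] at hE
  have s1 : ∑ h : Fin n, (if h = i then ρ * f h * (ρ - S i.val) + (1 - ρ) * f h * S i.val
      else 0) = ρ * f i * (ρ - S i.val) + (1 - ρ) * f i * S i.val := by
    rw [Finset.sum_ite_eq' univ i
      (fun h => ρ * f h * (ρ - S i.val) + (1 - ρ) * f h * S i.val)]
    rw [if_pos (Finset.mem_univ i)]
  have s2 : ∑ h : Fin n, (if h.val + 1 = i.val then (1 - ρ) * f h * (ρ - S (i.val - 1))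
      else 0) = (1 - ρ) * f prev * (ρ - S (i.val - 1)) := by
    have hcongr : ∀ h : Fin n, (if h.val + 1 = i.val then (1 - ρ) * f h * (ρ - S (i.val - 1))
        else 0) = (if h = prev then (1 - ρ) * f h * (ρ - S (i.val - 1)) else 0) := by
      intro h
      have : (h.val + 1 = i.val) ↔ (h = prev) := by
        rw [Fin.ext_iff]
        have hpv : prev.val = i.val - 1 := rfl
        rw [hpv]
        omega
      by_cases hc : h = prev
      · rw [if_pos (this.mpr hc), if_pos hc]
      · rw [if_neg (fun hx => hc (this.mp hx)), if_neg hc]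
    rw [Finset.sum_congr rfl (fun h _ => hcongr h),
      Finset.sum_ite_eq' univ prev (fun h => (1 - ρ) * f h * (ρ - S (i.val - 1)))]
    rw [if_pos (Finset.mem_univ prev)]
  have s3 : ∑ h : Fin n, (if i < h then ρ * f h * f i else 0)
      = ρ * f i * (ρ - S (i.val + 1)) := by
    rw [← Finset.sum_filter, ← hB (i.val + 1)]
    have hfil : univ.filter (fun h : Fin n => i < h)
        = univ.filter (fun h : Fin n => ¬ h.val < i.val + 1) := by
      apply Finset.filter_congr
      intro k _
      rw [Fin.lt_def]
      omega
    rw [hfil, Finset.mul_sum]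
    apply Finset.sum_congr rfl
    intro k _
    ring
  rw [s1, s2, s3] at hE
  -- relation S (i+1) = S i + f i
  have hstep : S (i.val + 1) = S i.val + f i := by
    rw [hS, hS]
    have hins : univ.filter (fun k : Fin n => k.val < i.val + 1)
        = insert i (univ.filter (fun k : Fin n => k.val < i.val)) := by
      ext k
      simp only [Finset.mem_insert, Finset.mem_filter, Finset.mem_univ, true_and,
        Fin.ext_iff]
      omega
    rw [hins, Finset.sum_insert (by
      simp only [Finset.mem_filter, Finset.mem_univ, true_and]; omega)]
    ring
  rw [hstep] at hE
  linear_combination hE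
end

section
/- The simplex {f ∈ ℝⁿ : f_j ≥ 0 for all j, ∑_j f_j = ρ} is forward-invariant for the system df_j/dt = η(∑_{h,k} A_{hk}^j f_h f_k − ρ f_j): any solution starting in the simplex with total mass ρ remains nonnegative with total mass ρ for all t ≥ 0. -/
open Finset

set_option maxHeartbeats 1000000 in
/-- the simplex `{f : f_j ≥ 0, ∑ f_j = ρ}` is forward-invariant for the system
`f_j' = η(∑_{h,k} A_{hk}^j f_h f_k − ρ f_j)`. -/
theorem simplex_forward_invariant
    (n : ℕ) (hn : 1 ≤ n) (η : ℝ) (hη : 0 < η) (ρ : ℝ) (hρ : 0 ≤ ρ)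
    (A : Fin n → Fin n → Fin n → ℝ)
    (hA_nonneg : ∀ h k j, 0 ≤ A h k j)
    (hA_sum : ∀ h k, ∑ j, A h k j = 1)
    (f : ℝ → Fin n → ℝ)
    (hf : ∀ j : Fin n, ∀ t : ℝ, 0 ≤ t →
      HasDerivAt (fun s => f s j)
        (η * ((∑ h, ∑ k, A h k j * f t h * f t k) - ρ * f t j)) t)
    (hinit_nonneg : ∀ j, 0 ≤ f 0 j) (hinit_mass : ∑ j, f 0 j = ρ) :
    ∀ t : ℝ, 0 ≤ t → (∀ j, 0 ≤ f t j) ∧ ∑ j, f t j = ρ := by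
  intro T hT
  have hnefin : Nonempty (Fin n) := ⟨⟨0, hn⟩⟩
  -- continuity
  have hcontj : ∀ j, ContinuousOn (fun s => f s j) (Set.Icc 0 T) := by
    intro j s hs
    exact ((hf j s hs.1).continuousAt).continuousWithinAt
  have hcontF : ContinuousOn f (Set.Icc (0:ℝ) T) := continuousOn_pi.mpr hcontj
  obtain ⟨C, hC⟩ := (isCompact_Icc : IsCompact (Set.Icc (0:ℝ) T)).exists_bound_of_continuousOn hcontF
  set M := max C 0 with hMdef
  have hM0 : 0 ≤ M := le_max_right _ _
  have hMb : ∀ s ∈ Set.Icc (0:ℝ) T, ∀ j, |f s j| ≤ M := by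
    intro s hs j
    calc |f s j| = ‖f s j‖ := rfl
      _ ≤ ‖f s‖ := norm_le_pi_norm _ j
      _ ≤ C := hC s hs
      _ ≤ M := le_max_left _ _
  set K := η * (n:ℝ)^2 * M + 1 with hKdef
  have hK0 : 0 < K := by positivity
  -- positivity with epsilon margin
  have key : ∀ ε : ℝ, 0 < ε → ∀ s ∈ Set.Icc (0:ℝ) T, ∀ j, -(ε * Real.exp (K * s)) ≤ f s j := by
    intro ε hε
    by_contra hcon
    push_neg at hcon
    set g : Fin n → ℝ → ℝ := fun j s => f s j + ε * Real.exp (K * s) with hg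
    have hne : (Finset.univ : Finset (Fin n)).Nonempty := Finset.univ_nonempty
    have hgcont : ∀ j, ContinuousOn (g j) (Set.Icc 0 T) := by
      intro j
      exact (hcontj j).add
        (((Real.continuous_exp.comp (continuous_const.mul continuous_id)).const_smul ε).continuousOn)
    set φ : ℝ → ℝ := fun s => Finset.univ.inf' hne (fun j => g j s) with hφ
    have hφcont : ContinuousOn φ (Set.Icc 0 T) :=
      ContinuousOn.finset_inf'_apply hne (fun j _ => hgcont j)
    set Z := {s ∈ Set.Icc (0:ℝ) T | φ s ≤ 0} with hZ
    have hZne : Z.Nonempty := by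
      obtain ⟨s, hs, j, hj⟩ := hcon
      refine ⟨s, hs, ?_⟩
      have hgj : g j s ≤ 0 := by simp only [hg]; linarith
      exact le_trans (Finset.inf'_le _ (Finset.mem_univ j)) hgj
    have hZbd : BddBelow Z := ⟨0, fun s hs => hs.1.1⟩
    set t₀ := sInf Z with ht₀
    have ht₀Icc : t₀ ∈ Set.Icc (0:ℝ) T := by
      obtain ⟨s, hs⟩ := id hZne
      exact ⟨le_csInf hZne fun x hx => hx.1.1, le_trans (csInf_le hZbd hs) hs.1.2⟩
    have ht₀cl : t₀ ∈ closure Z := csInf_mem_closure hZne hZbd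
    have hneZ : (nhdsWithin t₀ Z).NeBot := mem_closure_iff_nhdsWithin_neBot.mp ht₀cl
    have hφt₀ : φ t₀ ≤ 0 := by
      have htend : Filter.Tendsto φ (nhdsWithin t₀ Z) (nhds (φ t₀)) :=
        (hφcont t₀ ht₀Icc).mono (fun x hx => hx.1)
      exact le_of_tendsto htend
        (Filter.eventually_of_mem self_mem_nhdsWithin fun s hs => hs.2)
    -- before t₀ everything is positive
    have hbefore : ∀ s, 0 ≤ s → s < t₀ → ∀ j, 0 < g j s := by
      intro s hs hst j
      by_contra hneg
      push_neg at hneg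
      have hsIcc : s ∈ Set.Icc (0:ℝ) T := ⟨hs, le_trans hst.le ht₀Icc.2⟩
      have hsZ : s ∈ Z := ⟨hsIcc, le_trans (Finset.inf'_le _ (Finset.mem_univ j)) hneg⟩
      exact absurd (csInf_le hZbd hsZ) (not_le.mpr hst)
    have ht₀pos : 0 < t₀ := by
      rcases lt_or_eq_of_le ht₀Icc.1 with h | h
      · exact h
      · exfalso
        have h0 : 0 < φ 0 := by
          rw [hφ, Finset.lt_inf'_iff]
          intro j _
          have := hinit_nonneg j
          simp only [hg, mul_zero, Real.exp_zero, mul_one]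
          linarith
        have h1 := hφt₀
        rw [← h] at h1
        linarith
    -- t₀ is in the closure of [0, t₀)
    have hIcocl : t₀ ∈ closure (Set.Ico 0 t₀) := by
      rw [closure_Ico (ne_of_lt ht₀pos)]
      exact ⟨ht₀pos.le, le_rfl⟩
    have hneIco : (nhdsWithin t₀ (Set.Ico 0 t₀)).NeBot :=
      mem_closure_iff_nhdsWithin_neBot.mp hIcocl
    have hIcosub : Set.Ico 0 t₀ ⊆ Set.Icc 0 T :=
      fun x hx => ⟨hx.1, le_trans hx.2.le ht₀Icc.2⟩
    -- φ t₀ ≥ 0, hence g k t₀ ≥ 0 for all k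
    have hφt₀' : 0 ≤ φ t₀ := by
      have htend : Filter.Tendsto φ (nhdsWithin t₀ (Set.Ico 0 t₀)) (nhds (φ t₀)) :=
        (hφcont t₀ ht₀Icc).mono hIcosub
      refine ge_of_tendsto htend
        (Filter.eventually_of_mem self_mem_nhdsWithin fun s hs => ?_)
      rw [hφ, Finset.le_inf'_iff]
      exact fun j _ => (hbefore s hs.1 hs.2 j).le
    have hgk : ∀ k, 0 ≤ g k t₀ := by
      intro k
      exact le_trans hφt₀' (Finset.inf'_le _ (Finset.mem_univ k))
    obtain ⟨j, _, hjeq⟩ := Finset.exists_mem_eq_inf' hne (fun j => g j t₀)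
    have hgj0 : g j t₀ ≤ 0 := by rw [hφ] at hφt₀; rw [← hjeq]; exact hφt₀
    set δ := ε * Real.exp (K * t₀) with hδdef
    have hδ : 0 < δ := by positivity
    have hfj : f t₀ j ≤ -δ := by simp only [hg] at hgj0; linarith
    have hfk : ∀ k, -δ ≤ f t₀ k := by
      intro k
      have := hgk k
      simp only [hg] at this
      linarith
    -- derivative of g j at t₀
    set d := η * ((∑ h, ∑ k, A h k j * f t₀ h * f t₀ k) - ρ * f t₀ j)
      + ε * (Real.exp (K * t₀) * K) with hd
    have hderiv : HasDerivAt (g j) d t₀ := by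
      refine (hf j t₀ ht₀Icc.1).add ?_
      have := (((hasDerivAt_id t₀).const_mul K).exp).const_mul ε
      simpa using this
    -- d ≤ 0 via slopes from the left
    have hdle : d ≤ 0 := by
      have hw : HasDerivWithinAt (g j) d (Set.Ico 0 t₀) t₀ :=
        hderiv.hasDerivWithinAt
      rw [hasDerivWithinAt_iff_tendsto_slope] at hw
      have hsub : Set.Ico 0 t₀ \ {t₀} = Set.Ico 0 t₀ := by
        apply Set.diff_singleton_eq_self
        intro h; exact absurd h.2 (lt_irrefl t₀)
      rw [hsub] at hw
      refine le_of_tendsto hw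
        (Filter.eventually_of_mem self_mem_nhdsWithin fun s hs => ?_)
      have h1 : 0 < g j s := hbefore s hs.1 hs.2 j
      have h2 : g j s - g j t₀ > 0 := by linarith
      have h3 : s - t₀ < 0 := by linarith [hs.2]
      rw [slope_def_field]
      rw [div_nonpos_iff]
      left
      constructor
      · linarith
      · linarith
    -- lower bound on the quadratic term
    have hQ : -((n:ℝ)^2 * (M * δ)) ≤ ∑ h, ∑ k, A h k j * f t₀ h * f t₀ k := by
      have hterm : ∀ h k : Fin n, -(M * δ) ≤ A h k j * f t₀ h * f t₀ k := by
        intro h k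
        have ha0 : 0 ≤ A h k j := hA_nonneg h k j
        have ha1 : A h k j ≤ 1 := by
          calc A h k j ≤ ∑ j', A h k j' :=
                Finset.single_le_sum (fun i _ => hA_nonneg h k i) (Finset.mem_univ j)
            _ = 1 := hA_sum h k
        have hh := abs_le.mp (hMb t₀ ht₀Icc h)
        have hk' := abs_le.mp (hMb t₀ ht₀Icc k)
        have h1 := hfk h
        have h2 := hfk k
        rcases le_or_gt 0 (f t₀ h * f t₀ k) with hc | hc
        · nlinarith [mul_nonneg ha0 hc, mul_nonneg hM0 hδ.le]
        · have hxy : -(M * δ) ≤ f t₀ h * f t₀ k := by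
            rcases le_or_gt 0 (f t₀ k) with hy | hy
            · nlinarith [mul_le_mul_of_nonneg_right h1 hy,
                mul_le_mul_of_nonneg_left hk'.2 hδ.le]
            · nlinarith [mul_nonneg (sub_nonneg.mpr hh.2) (neg_nonneg.mpr hy.le),
                mul_le_mul_of_nonneg_left h2 hM0]
          nlinarith [hxy, mul_nonneg (sub_nonneg.mpr ha1) (neg_nonneg.mpr hc.le)]
      calc -((n:ℝ)^2 * (M * δ)) = ∑ _h : Fin n, ∑ _k : Fin n, -(M * δ) := by
            simp [Finset.sum_const, Finset.card_univ]; ring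
        _ ≤ ∑ h, ∑ k, A h k j * f t₀ h * f t₀ k :=
            Finset.sum_le_sum fun h _ => Finset.sum_le_sum fun k _ => hterm h k
    -- contradiction: d > 0
    have hdpos : 0 < d := by
      have h1 : -(ρ * f t₀ j) ≥ ρ * δ := by nlinarith
      have h2 : η * ((∑ h, ∑ k, A h k j * f t₀ h * f t₀ k) - ρ * f t₀ j)
          ≥ η * (-((n:ℝ)^2 * (M * δ)) + ρ * δ) := by
        apply mul_le_mul_of_nonneg_left _ hη.le
        linarith
      have h3 : ε * (Real.exp (K * t₀) * K) = δ * K := by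
        rw [hδdef]; ring
      rw [hd, h3]
      have h4 : δ * K = η * (n:ℝ)^2 * M * δ + δ := by rw [hKdef]; ring
      nlinarith [mul_nonneg (mul_nonneg hη.le hρ) hδ.le]
    linarith
  -- positivity on [0, T]
  have hpos : ∀ s ∈ Set.Icc (0:ℝ) T, ∀ j, 0 ≤ f s j := by
    intro s hs j
    have h1 : ∀ ε' : ℝ, 0 < ε' → 0 ≤ f s j + ε' := by
      intro ε' hε'
      have he : (0:ℝ) < Real.exp (K * s) := Real.exp_pos _
      have hεe : 0 < ε' / Real.exp (K * s) := by positivity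
      have h2 := key _ hεe s hs j
      rw [div_mul_cancel₀ _ (ne_of_gt he)] at h2
      linarith
    exact le_of_forall_pos_le_add fun ε' hε' => by linarith [h1 ε' hε']
  -- mass conservation
  set S : ℝ → ℝ := fun s => ∑ j, f s j with hS
  have hScont : ContinuousOn S (Set.Icc 0 T) := by
    apply continuousOn_finset_sum
    exact fun j _ => hcontj j
  have hS' : ∀ x, 0 ≤ x → HasDerivAt S (η * S x * (S x - ρ)) x := by
    intro x hx
    have hsum := HasDerivAt.sum (fun j (_ : j ∈ Finset.univ) => hf j x hx)
    have heq : ∑ j, η * ((∑ h, ∑ k, A h k j * f x h * f x k) - ρ * f x j)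
        = η * S x * (S x - ρ) := by
      calc ∑ j, η * ((∑ h, ∑ k, A h k j * f x h * f x k) - ρ * f x j)
          = η * ((∑ j, ∑ h, ∑ k, A h k j * f x h * f x k) - ρ * S x) := by
            rw [← Finset.mul_sum]
            congr 1
            rw [Finset.sum_sub_distrib, ← Finset.mul_sum]
        _ = η * (S x * S x - ρ * S x) := by
            congr 2
            calc ∑ j, ∑ h, ∑ k, A h k j * f x h * f x k
                = ∑ h, ∑ j, ∑ k, A h k j * f x h * f x k := Finset.sum_comm
              _ = ∑ h, ∑ k, ∑ j, A h k j * f x h * f x k :=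
                  Finset.sum_congr rfl fun _ _ => Finset.sum_comm
              _ = ∑ h, ∑ k, f x h * f x k := by
                  refine Finset.sum_congr rfl fun h _ => Finset.sum_congr rfl fun k _ => ?_
                  rw [← Finset.sum_mul, ← Finset.sum_mul, hA_sum, one_mul]
              _ = S x * S x := (Finset.sum_mul_sum _ _ _ _).symm
        _ = η * S x * (S x - ρ) := by ring
    have hSfun : S = ∑ i, fun s => f s i := by
      ext s
      simp [hS, Finset.sum_apply]
    rw [← heq, hSfun]
    exact hsum
  have hSb : ∀ x ∈ Set.Icc (0:ℝ) T, |S x| ≤ (n:ℝ) * M := by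
    intro x hx
    calc |S x| ≤ ∑ j, |f x j| := Finset.abs_sum_le_sum_abs _ _
      _ ≤ ∑ _j : Fin n, M := Finset.sum_le_sum fun j _ => hMb x hx j
      _ = (n:ℝ) * M := by simp [Finset.sum_const, Finset.card_univ]
  have hgron := norm_le_gronwallBound_of_norm_deriv_right_le
    (f := fun x => S x - ρ) (f' := fun x => η * S x * (S x - ρ))
    (δ := 0) (K := η * ((n:ℝ) * M)) (ε := 0) (a := 0) (b := T)
    (hScont.sub continuousOn_const)
    (fun x hx => ((hS' x hx.1).sub_const ρ).hasDerivWithinAt)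
    (by simp [hS, hinit_mass])
    (by
      intro x hx
      have hxIcc : x ∈ Set.Icc (0:ℝ) T := ⟨hx.1, hx.2.le⟩
      have h1 := hSb x hxIcc
      show ‖η * S x * (S x - ρ)‖ ≤ η * ((n:ℝ) * M) * ‖S x - ρ‖ + 0
      rw [Real.norm_eq_abs, Real.norm_eq_abs, abs_mul, abs_mul, abs_of_pos hη]
      have h2 : 0 ≤ |S x - ρ| := abs_nonneg _
      nlinarith [mul_le_mul_of_nonneg_right (mul_le_mul_of_nonneg_left h1 hη.le) h2])
  have hfin := hgron T ⟨hT, le_rfl⟩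
  rw [sub_zero, gronwallBound_ε0, zero_mul, Real.norm_eq_abs] at hfin
  have hST : S T = ρ := by
    have := abs_nonneg (S T - ρ)
    have habs : |S T - ρ| = 0 := le_antisymm hfin this
    have := abs_eq_zero.mp habs
    linarith
  exact ⟨fun j => hpos T ⟨hT, le_rfl⟩ j, hST⟩
end

section
/- For the general spatially homogeneous system with bounded interaction rate, two solutions with the same density satisfy the a priori continuity estimate ‖g(t) − f(t)‖₁ ≤ e^{3η₀ t} ‖g⁰ − f⁰‖₁ for all t > 0, where η₀ = sup_{ρ∈[0,1]} η[ρ]. -/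
open Finset Filter Set

set_option maxHeartbeats 1000000

lemma quad_bound {a x y B δ : ℝ} (ha0 : 0 ≤ a) (ha1 : a ≤ 1) (hB : 0 ≤ B)
    (hδ : 0 < δ) (hx : -δ ≤ x) (hy : -δ ≤ y) (hxB : x ≤ B) (hyB : y ≤ B) :
    -(B * δ) ≤ a * x * y := by
  rcases le_or_gt 0 x with hh | hh <;> rcases le_or_gt 0 y with hk' | hk'
  · nlinarith [mul_nonneg (mul_nonneg ha0 hh) hk', mul_nonneg hB hδ.le]
  · have h1 : a * x ≤ B := by nlinarith
    nlinarith [mul_le_mul_of_nonpos_right h1 hk'.le, mul_le_mul_of_nonneg_left hy hB]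
  · have h1 : -δ ≤ a * x := by
      nlinarith [mul_nonneg (sub_nonneg.2 ha1) (neg_nonneg.2 hh.le)]
    nlinarith [mul_le_mul_of_nonneg_right h1 hk', mul_le_mul_of_nonneg_left hyB hδ.le]
  · have hxy : 0 ≤ x * y := by nlinarith
    nlinarith [mul_nonneg ha0 hxy, mul_nonneg hB hδ.le]

lemma sol_nonneg
    (n : ℕ) (ρ : ℝ) (hρ0 : 0 ≤ ρ)
    (ηρ : ℝ) (hηρ : 0 ≤ ηρ)
    (A : Fin n → Fin n → Fin n → ℝ)
    (hA_nonneg : ∀ h k j, 0 ≤ A h k j) (hA_le : ∀ h k j, A h k j ≤ 1)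
    (f : ℝ → Fin n → ℝ)
    (hf : ∀ j : Fin n, ∀ t : ℝ, 0 ≤ t →
      HasDerivAt (fun s => f s j)
        (ηρ * ((∑ h, ∑ k, A h k j * f t h * f t k) - ρ * f t j)) t)
    (hf0_nonneg : ∀ j, 0 ≤ f 0 j) :
    ∀ t : ℝ, 0 ≤ t → ∀ j, 0 ≤ f t j := by
  intro t ht j0
  rcases eq_or_lt_of_le ht with h0 | h0
  · rw [← h0]; exact hf0_nonneg j0
  have hcont : ∀ k, ContinuousOn (fun s => f s k) (Set.Icc 0 t) := fun k s hs =>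
    ((hf k s hs.1).continuousAt).continuousWithinAt
  obtain ⟨C, hC⟩ := (isCompact_Icc (a := (0:ℝ)) (b := t)).exists_bound_of_continuousOn
    (continuousOn_pi.2 fun k => hcont k)
  set B := max C 0 with hBdef
  have hB0 : (0:ℝ) ≤ B := le_max_right _ _
  have hB : ∀ s ∈ Set.Icc (0:ℝ) t, ∀ k, |f s k| ≤ B := by
    intro s hs k
    calc |f s k| = ‖f s k‖ := rfl
    _ ≤ ‖f s‖ := norm_le_pi_norm (f s) k
    _ ≤ C := hC s hs
    _ ≤ B := le_max_left _ _
  set M := ηρ * (n:ℝ)^2 * B + 1 with hMdef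
  have key : ∀ ε : ℝ, 0 < ε → ∀ s ∈ Set.Icc (0:ℝ) t, ∀ k, 0 < f s k + ε * Real.exp (M * s) := by
    intro ε hε
    have hce : Continuous fun s : ℝ => ε * Real.exp (M * s) :=
      continuous_const.mul (Real.continuous_exp.comp (continuous_const.mul continuous_id))
    by_contra hbad
    push_neg at hbad
    obtain ⟨s₀, hs₀, k₀, hk₀⟩ := hbad
    set S : Set ℝ := ⋃ k : Fin n,
      (Set.Icc (0:ℝ) t ∩ (fun s => f s k + ε * Real.exp (M * s)) ⁻¹' Set.Iic 0) with hSdef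
    have hSsub : S ⊆ Set.Icc 0 t := by
      intro s hs; obtain ⟨k, hk⟩ := Set.mem_iUnion.1 hs; exact hk.1
    have hSclosed : IsClosed S := by
      apply isClosed_iUnion_of_finite
      intro k
      exact ContinuousOn.preimage_isClosed_of_isClosed
        ((hcont k).add hce.continuousOn) isClosed_Icc isClosed_Iic
    have hne : S.Nonempty := ⟨s₀, Set.mem_iUnion.2 ⟨k₀, hs₀, hk₀⟩⟩
    have hbdd : BddBelow S := ⟨0, fun s hs => (hSsub hs).1⟩
    set t₁ := sInf S with ht₁def
    have ht₁S : t₁ ∈ S := hSclosed.csInf_mem hne hbdd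
    obtain ⟨j₁, ht₁mem⟩ := Set.mem_iUnion.1 ht₁S
    have ht₁I : t₁ ∈ Set.Icc (0:ℝ) t := ht₁mem.1
    have ht₁le : f t₁ j₁ + ε * Real.exp (M * t₁) ≤ 0 := ht₁mem.2
    have ht₁0 : 0 < t₁ := by
      rcases eq_or_lt_of_le ht₁I.1 with h | h
      · exfalso
        rw [← h] at ht₁le
        simp only [mul_zero, Real.exp_zero, mul_one] at ht₁le
        linarith [hf0_nonneg j₁]
      · exact h
    have hlt : ∀ s ∈ Set.Ioo (0:ℝ) t₁, ∀ k, 0 < f s k + ε * Real.exp (M * s) := by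
      intro s hs k
      by_contra hle
      push_neg at hle
      have hmem : s ∈ S := Set.mem_iUnion.2
        ⟨k, ⟨⟨hs.1.le, hs.2.le.trans ht₁I.2⟩, hle⟩⟩
      exact absurd (csInf_le hbdd hmem) (not_le.2 hs.2)
    have hnb : (nhdsWithin t₁ (Set.Ioo (0:ℝ) t₁)).NeBot := by
      rw [← mem_closure_iff_nhdsWithin_neBot, closure_Ioo (ne_of_lt ht₁0)]
      exact ⟨ht₁0.le, le_refl _⟩
    have hge : ∀ k, 0 ≤ f t₁ k + ε * Real.exp (M * t₁) := by
      intro k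
      have hcw : ContinuousWithinAt (fun s => f s k + ε * Real.exp (M * s)) (Set.Icc 0 t) t₁ :=
        ((hcont k).add hce.continuousOn) t₁ ht₁I
      have htend : Tendsto (fun s => f s k + ε * Real.exp (M * s))
          (nhdsWithin t₁ (Set.Ioo (0:ℝ) t₁)) (nhds (f t₁ k + ε * Real.exp (M * t₁))) :=
        hcw.tendsto.mono_left (nhdsWithin_mono _ (fun s hs =>
          ⟨hs.1.le, hs.2.le.trans ht₁I.2⟩))
      exact ge_of_tendsto htend (eventually_mem_nhdsWithin.mono fun s hs => (hlt s hs k).le)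
    have heq : f t₁ j₁ + ε * Real.exp (M * t₁) = 0 := le_antisymm ht₁le (hge j₁)
    set δ := ε * Real.exp (M * t₁) with hδdef
    have hδpos : 0 < δ := mul_pos hε (Real.exp_pos _)
    have hfj : f t₁ j₁ = -δ := by linarith
    have hflow : ∀ k, -δ ≤ f t₁ k := fun k => by have := hge k; linarith
    have hexp : HasDerivAt (fun s => ε * Real.exp (M * s)) (ε * (Real.exp (M * t₁) * M)) t₁ := by
      have h1 : HasDerivAt (fun s : ℝ => M * s) M t₁ := by
        simpa using (hasDerivAt_id t₁).const_mul M
      exact ((Real.hasDerivAt_exp (M * t₁)).comp t₁ h1).const_mul ε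
    set d := ηρ * ((∑ h, ∑ k, A h k j₁ * f t₁ h * f t₁ k) - ρ * f t₁ j₁)
      + ε * (Real.exp (M * t₁) * M) with hddef
    have hd : HasDerivAt (fun s => f s j₁ + ε * Real.exp (M * s)) d t₁ :=
      (hf j₁ t₁ ht₁I.1).add hexp
    have hdle : d ≤ 0 := by
      have hs := hasDerivAt_iff_tendsto_slope.1 hd
      have hs' : Tendsto (slope (fun s => f s j₁ + ε * Real.exp (M * s)) t₁)
          (nhdsWithin t₁ (Set.Ioo (0:ℝ) t₁)) (nhds d) :=
        hs.mono_left (nhdsWithin_mono _ (fun s hs => (ne_of_lt hs.2 : s ≠ t₁)))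
      refine le_of_tendsto hs' (eventually_mem_nhdsWithin.mono fun s hs => ?_)
      have h1 : 0 < f s j₁ + ε * Real.exp (M * s) := hlt s hs j₁
      have h2 : s - t₁ < 0 := sub_neg.2 hs.2
      rw [slope_def_field, heq, sub_zero]
      exact div_nonpos_of_nonneg_of_nonpos h1.le h2.le
    have hQ : ∀ h k : Fin n, -(B * δ) ≤ A h k j₁ * f t₁ h * f t₁ k := by
      intro h k
      have hfh := hflow h
      have hfk := hflow k
      have hfhB : f t₁ h ≤ B := le_of_abs_le (hB t₁ ht₁I h)
      have hfkB : f t₁ k ≤ B := le_of_abs_le (hB t₁ ht₁I k)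
      have hA1 := hA_le h k j₁
      have hA0 := hA_nonneg h k j₁
      exact quad_bound hA0 hA1 hB0 hδpos hfh hfk hfhB hfkB
    have hQsum : -((n:ℝ)^2 * (B * δ)) ≤ ∑ h, ∑ k, A h k j₁ * f t₁ h * f t₁ k := by
      have h1 : ∑ h : Fin n, ∑ k : Fin n, -(B * δ)
          ≤ ∑ h, ∑ k, A h k j₁ * f t₁ h * f t₁ k :=
        Finset.sum_le_sum fun h _ => Finset.sum_le_sum fun k _ => hQ h k
      calc -((n:ℝ)^2 * (B * δ)) = ∑ _h : Fin n, ∑ _k : Fin n, -(B * δ) := by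
            simp [Finset.sum_const, card_univ]; ring
        _ ≤ _ := h1
    have hdpos : 0 < d := by
      have hεM : ε * (Real.exp (M * t₁) * M) = δ * M := by rw [hδdef]; ring
      have h2 : ηρ * (-((n:ℝ)^2 * (B * δ)) + ρ * δ)
          ≤ ηρ * ((∑ h, ∑ k, A h k j₁ * f t₁ h * f t₁ k) - ρ * f t₁ j₁) := by
        apply mul_le_mul_of_nonneg_left _ hηρ
        rw [hfj]
        linarith [hQsum]
      rw [hddef, hεM, hMdef]
      have h3 : 0 ≤ ηρ * (ρ * δ) := mul_nonneg hηρ (mul_nonneg hρ0 hδpos.le)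
      nlinarith [h2, h3]
    linarith
  by_contra hneg
  push_neg at hneg
  have hε : 0 < -f t j0 / Real.exp (M * t) := by
    apply div_pos (by linarith) (Real.exp_pos _)
  have := key _ hε t ⟨ht, le_refl t⟩ j0
  rw [div_mul_cancel₀ _ (Real.exp_ne_zero _)] at this
  linarith


lemma sol_mass
    (n : ℕ) (ρ ηρ : ℝ)
    (A : Fin n → Fin n → Fin n → ℝ)
    (hA_sum : ∀ h k, ∑ j, A h k j = 1)
    (f : ℝ → Fin n → ℝ)
    (hf : ∀ j : Fin n, ∀ t : ℝ, 0 ≤ t →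
      HasDerivAt (fun s => f s j)
        (ηρ * ((∑ h, ∑ k, A h k j * f t h * f t k) - ρ * f t j)) t)
    (hf0_mass : ∑ j, f 0 j = ρ) :
    ∀ t : ℝ, 0 ≤ t → ∑ j, f t j = ρ := by
  intro t ht
  rcases eq_or_lt_of_le ht with h0 | h0
  · rw [← h0]; exact hf0_mass
  set m : ℝ → ℝ := fun s => ∑ j, f s j with hm
  have hmderiv : ∀ s : ℝ, 0 ≤ s → HasDerivAt m (ηρ * m s * (m s - ρ)) s := by
    intro s hs
    have h1 : HasDerivAt m
        (∑ j, ηρ * ((∑ h, ∑ k, A h k j * f s h * f s k) - ρ * f s j)) s :=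
      HasDerivAt.fun_sum fun j _ => hf j s hs
    have key : ∑ j, ∑ h, ∑ k, A h k j * f s h * f s k = m s * m s := by
      calc ∑ j, ∑ h, ∑ k, A h k j * f s h * f s k
          = ∑ h, ∑ j, ∑ k, A h k j * f s h * f s k := Finset.sum_comm
        _ = ∑ h, ∑ k, ∑ j, A h k j * f s h * f s k :=
            Finset.sum_congr rfl fun h _ => Finset.sum_comm
        _ = ∑ h, ∑ k, f s h * f s k := by
            refine Finset.sum_congr rfl fun h _ => Finset.sum_congr rfl fun k _ => ?_
            simp_rw [mul_assoc, ← Finset.sum_mul]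
            rw [hA_sum h k, one_mul]
        _ = m s * m s := by rw [hm, Finset.sum_mul_sum]
    have heq : ∑ j, ηρ * ((∑ h, ∑ k, A h k j * f s h * f s k) - ρ * f s j)
        = ηρ * m s * (m s - ρ) := by
      rw [← Finset.mul_sum, Finset.sum_sub_distrib, key, ← Finset.mul_sum]
      have h3 : ∑ i, f s i = m s := rfl
      rw [h3]; ring
    rwa [heq] at h1
  have hmc : ContinuousOn m (Set.Icc 0 t) := fun s hs =>
    (hmderiv s hs.1).continuousAt.continuousWithinAt
  obtain ⟨C, hC⟩ := (isCompact_Icc (a := (0:ℝ)) (b := t)).exists_bound_of_continuousOn hmc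
  set C' := max C 0 with hC'def
  have hC'0 : (0:ℝ) ≤ C' := le_max_right _ _
  set K := |ηρ| * C' with hKdef
  have hgr := norm_le_gronwallBound_of_norm_deriv_right_le
    (f := fun s => m s - ρ) (f' := fun s => ηρ * m s * (m s - ρ))
    (δ := 0) (K := K) (ε := 0) (a := 0) (b := t)
    (hmc.sub continuousOn_const)
    (fun x hx => ((hmderiv x hx.1).sub_const ρ).hasDerivWithinAt)
    (by simp [hm, hf0_mass])
    (fun x hx => ?_) t ⟨ht, le_refl t⟩
  · rw [gronwallBound_ε0, zero_mul] at hgr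
    have h2 : m t - ρ = 0 := by simpa using hgr
    have h3 : m t = ρ := by linarith
    exact h3
  · have hmx : |m x| ≤ C' := le_trans (hC x ⟨hx.1, hx.2.le⟩) (le_max_left _ _)
    have : ‖ηρ * m x * (m x - ρ)‖ = |ηρ| * |m x| * ‖m x - ρ‖ := by
      rw [Real.norm_eq_abs, abs_mul, abs_mul, Real.norm_eq_abs]
    rw [this, add_zero, hKdef]
    apply mul_le_mul_of_nonneg_right _ (norm_nonneg _)
    exact mul_le_mul_of_nonneg_left hmx (abs_nonneg _)


lemma l1norm (n : ℕ) (v : Fin n → ℝ) :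
    ‖((PiLp.continuousLinearEquiv 1 ℝ (fun _ : Fin n => ℝ)).symm v)‖ = ∑ j, |v j| := by
  rw [PiLp.norm_eq_sum (by simp : 0 < (1 : ENNReal).toReal)]
  simp [Real.rpow_one, PiLp.continuousLinearEquiv_symm_apply,
    Real.norm_eq_abs]


/-- a priori continuity estimate. Two solutions of the spatially homogeneous
system with the same density `ρ` satisfy `‖g(t) − f(t)‖₁ ≤ e^{3η₀ t} ‖g⁰ − f⁰‖₁`, where `η₀`
bounds the interaction rate. -/
theorem a_priori_continuity_estimate
    (n : ℕ) (hn : 1 ≤ n) (ρ : ℝ) (hρ0 : 0 ≤ ρ) (hρ1 : ρ ≤ 1)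
    (ηρ η₀ : ℝ) (hηρ : 0 ≤ ηρ) (hηρ₀ : ηρ ≤ η₀)
    (A : Fin n → Fin n → Fin n → ℝ)
    (hA_nonneg : ∀ h k j, 0 ≤ A h k j) (hA_le : ∀ h k j, A h k j ≤ 1)
    (hA_sum : ∀ h k, ∑ j, A h k j = 1)
    (f g : ℝ → Fin n → ℝ)
    (hf : ∀ j : Fin n, ∀ t : ℝ, 0 ≤ t →
      HasDerivAt (fun s => f s j)
        (ηρ * ((∑ h, ∑ k, A h k j * f t h * f t k) - ρ * f t j)) t)
    (hg : ∀ j : Fin n, ∀ t : ℝ, 0 ≤ t →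
      HasDerivAt (fun s => g s j)
        (ηρ * ((∑ h, ∑ k, A h k j * g t h * g t k) - ρ * g t j)) t)
    (hf0_nonneg : ∀ j, 0 ≤ f 0 j) (hg0_nonneg : ∀ j, 0 ≤ g 0 j)
    (hf0_mass : ∑ j, f 0 j = ρ) (hg0_mass : ∑ j, g 0 j = ρ) :
    ∀ t : ℝ, 0 < t →
      ∑ j, |g t j - f t j| ≤ Real.exp (3 * η₀ * t) * ∑ j, |g 0 j - f 0 j| := by
  intro t ht
  have hfpos := sol_nonneg n ρ hρ0 ηρ hηρ A hA_nonneg hA_le f hf hf0_nonneg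
  have hgpos := sol_nonneg n ρ hρ0 ηρ hηρ A hA_nonneg hA_le g hg hg0_nonneg
  have hfmass := sol_mass n ρ ηρ A hA_sum f hf hf0_mass
  have hgmass := sol_mass n ρ ηρ A hA_sum g hg hg0_mass
  have habsf : ∀ s : ℝ, 0 ≤ s → ∑ j, |f s j| = ρ := by
    intro s hs
    rw [← hfmass s hs]
    exact Finset.sum_congr rfl fun j _ => abs_of_nonneg (hfpos s hs j)
  have habsg : ∀ s : ℝ, 0 ≤ s → ∑ j, |g s j| = ρ := by
    intro s hs
    rw [← hgmass s hs]
    exact Finset.sum_congr rfl fun j _ => abs_of_nonneg (hgpos s hs j)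
  have tri : ∀ x y : ℝ, |x - y| ≤ |x| + |y| := fun x y => by
    rw [sub_eq_add_neg]
    exact (abs_add_le _ _).trans (by rw [abs_neg])
  set e := PiLp.continuousLinearEquiv 1 ℝ (fun _ : Fin n => ℝ) with he
  set D : ℝ → PiLp 1 (fun _ : Fin n => ℝ) :=
    fun s => e.symm (fun j => g s j - f s j) with hD
  set D' : ℝ → PiLp 1 (fun _ : Fin n => ℝ) := fun s => e.symm (fun j =>
    ηρ * ((∑ h, ∑ k, A h k j * g s h * g s k) - ρ * g s j)
    - ηρ * ((∑ h, ∑ k, A h k j * f s h * f s k) - ρ * f s j)) with hD'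
  have hDderiv : ∀ s : ℝ, 0 ≤ s → HasDerivAt D (D' s) s := by
    intro s hs
    have hw : HasDerivAt (fun u => (fun j => g u j - f u j)) (fun j =>
        ηρ * ((∑ h, ∑ k, A h k j * g s h * g s k) - ρ * g s j)
        - ηρ * ((∑ h, ∑ k, A h k j * f s h * f s k) - ρ * f s j)) s :=
      hasDerivAt_pi.2 fun j => (hg j s hs).sub (hf j s hs)
    exact ((e.symm : (Fin n → ℝ) →L[ℝ] PiLp 1 fun _ : Fin n => ℝ).hasFDerivAt.comp_hasDerivAt
      s hw)
  have hbound : ∀ x : ℝ, 0 ≤ x → ‖D' x‖ ≤ 3 * η₀ * ‖D x‖ := by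
    intro x hx
    have hDx : ‖D x‖ = ∑ j, |g x j - f x j| := l1norm n _
    have hD'x : ‖D' x‖ = ∑ j, |ηρ * ((∑ h, ∑ k, A h k j * g x h * g x k) - ρ * g x j)
        - ηρ * ((∑ h, ∑ k, A h k j * f x h * f x k) - ρ * f x j)| := l1norm n _
    have hDx0 : 0 ≤ ∑ j, |g x j - f x j| := Finset.sum_nonneg fun j _ => abs_nonneg _
    have step1 : ∀ j : Fin n,
        |ηρ * ((∑ h, ∑ k, A h k j * g x h * g x k) - ρ * g x j)
          - ηρ * ((∑ h, ∑ k, A h k j * f x h * f x k) - ρ * f x j)|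
        ≤ ηρ * ((∑ h, ∑ k, A h k j * |g x h * g x k - f x h * f x k|)
            + ρ * |g x j - f x j|) := by
      intro j
      have e1 : ηρ * ((∑ h, ∑ k, A h k j * g x h * g x k) - ρ * g x j)
          - ηρ * ((∑ h, ∑ k, A h k j * f x h * f x k) - ρ * f x j)
          = ηρ * (((∑ h, ∑ k, A h k j * g x h * g x k)
              - (∑ h, ∑ k, A h k j * f x h * f x k)) - ρ * (g x j - f x j)) := by ring
      rw [e1, abs_mul, abs_of_nonneg hηρ]
      apply mul_le_mul_of_nonneg_left _ hηρ
      refine (tri _ _).trans (add_le_add ?_ ?_)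
      · have e2 : (∑ h, ∑ k, A h k j * g x h * g x k)
            - (∑ h, ∑ k, A h k j * f x h * f x k)
            = ∑ h, ∑ k, A h k j * (g x h * g x k - f x h * f x k) := by
          rw [← Finset.sum_sub_distrib]
          refine Finset.sum_congr rfl fun h _ => ?_
          rw [← Finset.sum_sub_distrib]
          exact Finset.sum_congr rfl fun k _ => by ring
        rw [e2]
        refine (Finset.abs_sum_le_sum_abs _ _).trans ?_
        refine Finset.sum_le_sum fun h _ => ?_
        refine (Finset.abs_sum_le_sum_abs _ _).trans ?_
        refine Finset.sum_le_sum fun k _ => ?_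
        rw [abs_mul, abs_of_nonneg (hA_nonneg h k j)]
      · rw [abs_mul, abs_of_nonneg hρ0]
    have key2 : ∑ j, ∑ h, ∑ k, A h k j * |g x h * g x k - f x h * f x k|
        = ∑ h, ∑ k, |g x h * g x k - f x h * f x k| := by
      calc ∑ j, ∑ h, ∑ k, A h k j * |g x h * g x k - f x h * f x k|
          = ∑ h, ∑ j, ∑ k, A h k j * |g x h * g x k - f x h * f x k| := Finset.sum_comm
        _ = ∑ h, ∑ k, ∑ j, A h k j * |g x h * g x k - f x h * f x k| :=
            Finset.sum_congr rfl fun h _ => Finset.sum_comm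
        _ = ∑ h, ∑ k, |g x h * g x k - f x h * f x k| := by
            refine Finset.sum_congr rfl fun h _ => Finset.sum_congr rfl fun k _ => ?_
            rw [← Finset.sum_mul, hA_sum h k, one_mul]
    have key3 : ∀ h k : Fin n, |g x h * g x k - f x h * f x k|
        ≤ |g x h| * |g x k - f x k| + |g x h - f x h| * |f x k| := by
      intro h k
      have e3 : g x h * g x k - f x h * f x k
          = g x h * (g x k - f x k) + (g x h - f x h) * f x k := by ring
      rw [e3]
      exact (abs_add_le _ _).trans (by rw [abs_mul, abs_mul])
    have key4 : ∑ h, ∑ k, (|g x h| * |g x k - f x k| + |g x h - f x h| * |f x k|)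
        = ρ * (∑ j, |g x j - f x j|) + (∑ j, |g x j - f x j|) * ρ := by
      simp_rw [Finset.sum_add_distrib]
      rw [← Finset.sum_mul_sum, ← Finset.sum_mul_sum, habsg x hx, habsf x hx]
    have step2 : ‖D' x‖ ≤ ηρ * ((ρ * (∑ j, |g x j - f x j|)
        + (∑ j, |g x j - f x j|) * ρ) + ρ * (∑ j, |g x j - f x j|)) := by
      rw [hD'x]
      calc ∑ j, |ηρ * ((∑ h, ∑ k, A h k j * g x h * g x k) - ρ * g x j)
            - ηρ * ((∑ h, ∑ k, A h k j * f x h * f x k) - ρ * f x j)|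
          ≤ ∑ j, ηρ * ((∑ h, ∑ k, A h k j * |g x h * g x k - f x h * f x k|)
              + ρ * |g x j - f x j|) := Finset.sum_le_sum fun j _ => step1 j
        _ = ηρ * ((∑ j, ∑ h, ∑ k, A h k j * |g x h * g x k - f x h * f x k|)
              + ρ * ∑ j, |g x j - f x j|) := by
            rw [← Finset.mul_sum, Finset.sum_add_distrib, ← Finset.mul_sum]
        _ ≤ ηρ * ((ρ * (∑ j, |g x j - f x j|) + (∑ j, |g x j - f x j|) * ρ)
              + ρ * (∑ j, |g x j - f x j|)) := by
            apply mul_le_mul_of_nonneg_left _ hηρ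
            apply add_le_add_left
            rw [key2, ← key4]
            exact Finset.sum_le_sum fun h _ => Finset.sum_le_sum fun k _ => key3 h k
    rw [hDx]
    have hηρρ : ηρ * ρ ≤ η₀ := le_trans (by nlinarith) hηρ₀
    nlinarith [mul_le_mul_of_nonneg_right hηρρ hDx0]
  have hgr := norm_le_gronwallBound_of_norm_deriv_right_le
    (f := D) (f' := D') (δ := ‖D 0‖) (K := 3 * η₀) (ε := 0) (a := 0) (b := t)
    (fun s hs => (hDderiv s hs.1).continuousAt.continuousWithinAt)
    (fun x hx => (hDderiv x hx.1).hasDerivWithinAt)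
    (le_refl _)
    (fun x hx => by rw [add_zero]; exact hbound x hx.1)
    t ⟨ht.le, le_refl t⟩
  rw [sub_zero, gronwallBound_ε0] at hgr
  calc ∑ j, |g t j - f t j| = ‖D t‖ := (l1norm n _).symm
    _ ≤ ‖D 0‖ * Real.exp (3 * η₀ * t) := hgr
    _ = Real.exp (3 * η₀ * t) * ∑ j, |g 0 j - f 0 j| := by
        rw [l1norm n _, mul_comm]
end
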